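/- Let H be a real Hilbert space, S : H → H with Sx_* = 0 and S (1/2)-cocoercive and quasi-ν-strongly monotone at x_*, and let x_{k+1} = x_k - η(Sx_k - e_k) with η > 0. Then ‖x_{k+1} - x_*‖² ≤ (1 - ην)‖x_k - x_*‖² + η(-1/2 + η(1+δ))‖Sx_k‖² + 2η‖x_k - x_*‖‖e_k‖ + η²((δ+1)/δ)‖e_k‖² for any δ > 0. -/

import Mathlib

theorem stmt_9 {H : Type*} [NormedAddCommGroup H] [InnerProductSpace ℝ H] [CompleteSpace H]
    (S : H → H) (xstar : H) (hfix : S xstar = 0) (ν : ℝ) (hν : 0 < ν)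
    (hcoco : ∀ x, (inner ℝ (x - xstar) (S x) : ℝ) ≥ (1 / 2) * ‖S x‖ ^ 2)
    (hquasi : ∀ x, (inner ℝ (x - xstar) (S x) : ℝ) ≥ ν * ‖x - xstar‖ ^ 2)
    (η δ : ℝ) (hη : 0 < η) (hδ : 0 < δ)
    (xk ek : H) :
    ‖(xk - η • (S xk - ek)) - xstar‖ ^ 2 ≤
      (1 - η * ν) * ‖xk - xstar‖ ^ 2 +
        η * (-(1 / 2) + η * (1 + δ)) * ‖S xk‖ ^ 2 +
        2 * η * ‖xk - xstar‖ * ‖ek‖ +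
        η ^ 2 * ((δ + 1) / δ) * ‖ek‖ ^ 2 := by
  set u := xk - xstar with hu
  set v := S xk with hv
  have hexp : ‖(xk - η • (S xk - ek)) - xstar‖ ^ 2
      = ‖u‖ ^ 2 - 2 * η * (inner ℝ u (v - ek) : ℝ) + η ^ 2 * ‖v - ek‖ ^ 2 := by
    have : (xk - η • (S xk - ek)) - xstar = u - η • (v - ek) := by
      rw [hu, hv]; abel
    rw [this, norm_sub_sq_real, real_inner_smul_right, norm_smul]
    simp [abs_of_pos hη]
    ring
  have hve : ‖v - ek‖ ^ 2 = ‖v‖ ^ 2 - 2 * (inner ℝ v ek : ℝ) + ‖ek‖ ^ 2 := by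
    rw [norm_sub_sq_real]
  have hin : (inner ℝ u (v - ek) : ℝ) = (inner ℝ u v : ℝ) - (inner ℝ u ek : ℝ) := by
    rw [inner_sub_right]
  have h1 : (inner ℝ u v : ℝ) ≥ ν * ‖u‖ ^ 2 := hquasi xk
  have h2 : (inner ℝ u v : ℝ) ≥ (1 / 2) * ‖v‖ ^ 2 := hcoco xk
  have h3 : (inner ℝ u ek : ℝ) ≤ ‖u‖ * ‖ek‖ := real_inner_le_norm u ek
  have h4 : -(inner ℝ v ek : ℝ) ≤ ‖v‖ * ‖ek‖ := by
    have := real_inner_le_norm v (-ek)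
    simpa [inner_neg_right] using this
  have hyoung : 2 * (‖v‖ * ‖ek‖) ≤ δ * ‖v‖ ^ 2 + (1 / δ) * ‖ek‖ ^ 2 := by
    rw [ge_iff_le, ← sub_nonneg] at *
    have key : 0 ≤ (δ * ‖v‖ - ‖ek‖) ^ 2 := sq_nonneg _
    have : δ * ‖v‖ ^ 2 + (1 / δ) * ‖ek‖ ^ 2 - 2 * (‖v‖ * ‖ek‖)
        = (δ * ‖v‖ - ‖ek‖) ^ 2 / δ := by field_simp; ring
    linarith [div_nonneg key hδ.le, this.ge, this.le]
  have hδdiv : (δ + 1) / δ = 1 + 1 / δ := by field_simp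
  rw [hexp, hve, hin, hδdiv]
  nlinarith [sq_nonneg η, mul_pos hη hη, sq_nonneg ‖ek‖, sq_nonneg ‖v‖,
    mul_le_mul_of_nonneg_left hyoung (sq_nonneg η),
    mul_le_mul_of_nonneg_left h3 (by linarith : (0:ℝ) ≤ 2 * η)]
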